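/- For every real q > 0 and every positive integer n, q^n · ∏_{k=0}^{n-1} (1+q^{4k+1})/(1+q^{4k+3}) = p^n · ∏_{k=0}^{n-1} (1+p^{4k+1})/(1+p^{4k+3}), where p = 1/q. -/

import Mathlib

theorem square_series_term_self_duality (q : ℝ) (hq : 0 < q) (n : ℕ) (hn : 1 ≤ n) :
    q ^ n * ∏ k ∈ Finset.range n, (1 + q ^ (4 * k + 1)) / (1 + q ^ (4 * k + 3)) =
      (1 / q) ^ n *
        ∏ k ∈ Finset.range n, (1 + (1 / q) ^ (4 * k + 1)) / (1 + (1 / q) ^ (4 * k + 3)) := by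
  have hq' : q ≠ 0 := hq.ne'
  have key : ∀ k : ℕ, (1 + (1 / q) ^ (4 * k + 1)) / (1 + (1 / q) ^ (4 * k + 3)) =
      q ^ 2 * ((1 + q ^ (4 * k + 1)) / (1 + q ^ (4 * k + 3))) := by
    intro k
    have h1 : (0:ℝ) < 1 + q ^ (4 * k + 1) := by positivity
    have h3 : (0:ℝ) < 1 + q ^ (4 * k + 3) := by positivity
    have h3' : (0:ℝ) < 1 + (1 / q) ^ (4 * k + 3) := by positivity
    simp only [one_div, inv_pow]
    field_simp
    ring
  have hprod : ∏ k ∈ Finset.range n, (1 + (1 / q) ^ (4 * k + 1)) / (1 + (1 / q) ^ (4 * k + 3)) =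
      (q ^ 2) ^ n * ∏ k ∈ Finset.range n, (1 + q ^ (4 * k + 1)) / (1 + q ^ (4 * k + 3)) := by
    rw [show (q ^ 2) ^ n = ∏ _k ∈ Finset.range n, q ^ 2 by simp, ← Finset.prod_mul_distrib]
    exact Finset.prod_congr rfl fun k _ => key k
  rw [hprod, ← mul_assoc]
  congr 1
  rw [one_div, inv_pow, ← pow_mul]
  field_simp
  ring
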